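/- Fix p, q > 0, d > 0. Let ρ(x;σ) = (1/(2σ)) e^{-|x|/σ} be the Laplace density. Then for the symmetric case k = 1, the asymptotic scaling limit satisfies: lim_{σ→0⁺} [∫_0^d dx / (p ρ(x;σ) + q ρ(d-x;σ))] / (π σ² e^{d/(2σ)}) = 1/√(pq). -/

import Mathlib

open MeasureTheory Real Filter

/-- The Laplace density with scale `σ`. -/
noncomputable def laplacePDF (σ x : ℝ) : ℝ := (1 / (2 * σ)) * Real.exp (-|x| / σ)

lemma laplace_integral_eval (p q d : ℝ) (hp : 0 < p) (hq : 0 < q) (hd : 0 < d)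
    (σ : ℝ) (hσ : 0 < σ) :
    (∫ x in (0:ℝ)..d, 1 / (p * laplacePDF σ x + q * laplacePDF σ (d - x))) =
      (2 * σ ^ 2 / Real.sqrt (p * q)) * Real.exp (d / (2 * σ)) *
        (Real.arctan (Real.sqrt (q / p) * Real.exp (d / (2 * σ))) -
         Real.arctan (Real.sqrt (q / p) * Real.exp (-(d / (2 * σ))))) := by
  set c : ℝ := Real.sqrt (q / p) * Real.exp (-(d / (2 * σ))) with hc_def
  have hc : 0 < c := by positivity
  have hσ' : σ ≠ 0 := hσ.ne'
  have hB2 : Real.exp (d / σ) = Real.exp (d / (2 * σ)) ^ 2 := by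
    rw [sq, ← Real.exp_add]
    congr 1
    field_simp
    ring
  -- derivative computation
  have key : ∀ x ∈ Set.uIcc (0:ℝ) d,
      HasDerivAt (fun y => (2 * σ ^ 2 / Real.sqrt (p * q)) * Real.exp (d / (2 * σ)) *
          Real.arctan (c * Real.exp (y / σ)))
        (1 / (p * laplacePDF σ x + q * laplacePDF σ (d - x))) x := by
    intro x hx
    rw [Set.uIcc_of_le hd.le] at hx
    have h1 : HasDerivAt (fun y : ℝ => c * Real.exp (y / σ))
        (c * (Real.exp (x / σ) * (1 / σ))) x := by
      have := ((hasDerivAt_id x).div_const σ).exp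
      simpa using this.const_mul c
    have h2 := (h1.arctan).const_mul ((2 * σ ^ 2 / Real.sqrt (p * q)) * Real.exp (d / (2 * σ)))
    convert h2 using 1
    · rfl
    · rfl
    -- algebra: show integrand equals the derivative expression
    simp only [laplacePDF]
    rw [abs_of_nonneg hx.1, abs_of_nonneg (by linarith [hx.2] : (0:ℝ) ≤ d - x)]
    have hA : Real.exp (-x / σ) = (Real.exp (x / σ))⁻¹ := by
      rw [← Real.exp_neg]; ring_nf
    have hDX : Real.exp (-(d - x) / σ) = Real.exp (x / σ) / Real.exp (d / (2 * σ)) ^ 2 := by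
      rw [← hB2, eq_div_iff (Real.exp_ne_zero _), ← Real.exp_add]
      congr 1
      field_simp
      ring
    rw [hA, hDX, hc_def]
    have hspq : Real.sqrt (p * q) = Real.sqrt p * Real.sqrt q := Real.sqrt_mul hp.le q
    have hqp : Real.sqrt (q / p) = Real.sqrt q / Real.sqrt p := Real.sqrt_div hq.le p
    rw [hspq, hqp]
    set sp := Real.sqrt p with hsp_def
    set sq := Real.sqrt q with hsq_def
    have hsp : (0:ℝ) < sp := Real.sqrt_pos.2 hp
    have hsq : (0:ℝ) < sq := Real.sqrt_pos.2 hq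
    have hpe : p = sp ^ 2 := (Real.sq_sqrt hp.le).symm
    have hqe : q = sq ^ 2 := (Real.sq_sqrt hq.le).symm
    rw [hpe, hqe]
    have hA0 : Real.exp (x / σ) ≠ 0 := Real.exp_ne_zero _
    have hB0 : Real.exp (d / (2 * σ)) ≠ 0 := Real.exp_ne_zero _
    have hden : (0:ℝ) < 1 + (sq / sp * (Real.exp (d / (2 * σ)))⁻¹ * Real.exp (x / σ)) ^ 2 := by
      positivity
    have hd1 : (1 + (sq / sp * (Real.exp (d / (2 * σ)))⁻¹ * Real.exp (x / σ)) ^ 2) ≠ 0 :=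
      hden.ne'
    rw [Real.exp_neg]
    field_simp
  have hcont : IntervalIntegrable
      (fun x => 1 / (p * laplacePDF σ x + q * laplacePDF σ (d - x))) volume 0 d := by
    apply ContinuousOn.intervalIntegrable
    apply ContinuousOn.div continuousOn_const
    · apply Continuous.continuousOn
      unfold laplacePDF
      fun_prop
    · intro x _
      have h1 : 0 < laplacePDF σ x := by unfold laplacePDF; positivity
      have h2 : 0 < laplacePDF σ (d - x) := by unfold laplacePDF; positivity
      positivity
  rw [intervalIntegral.integral_eq_sub_of_hasDerivAt key hcont]
  have e1 : c * Real.exp (d / σ) = Real.sqrt (q / p) * Real.exp (d / (2 * σ)) := by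
    rw [hc_def, hB2, Real.exp_neg]
    field_simp
  have e2 : c * Real.exp ((0:ℝ) / σ) = Real.sqrt (q / p) * Real.exp (-(d / (2 * σ))) := by
    simp [hc_def]
  rw [e1, e2]
  ring

theorem laplace_symmetric_scaling_limit (p q d : ℝ) (hp : 0 < p) (hq : 0 < q)
    (hd : 0 < d) :
    Tendsto
      (fun σ : ℝ =>
        (∫ x in (0 : ℝ)..d, 1 / (p * laplacePDF σ x + q * laplacePDF σ (d - x))) /
          (Real.pi * σ ^ 2 * Real.exp (d / (2 * σ))))
      (nhdsWithin 0 (Set.Ioi 0))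
      (nhds (1 / Real.sqrt (p * q))) := by
  have hpq : 0 < Real.sqrt (p * q) := Real.sqrt_pos.2 (by positivity)
  have hπ : (0:ℝ) < Real.pi := Real.pi_pos
  -- the simplified function
  set g : ℝ → ℝ := fun σ => (2 / (Real.pi * Real.sqrt (p * q))) *
      (Real.arctan (Real.sqrt (q / p) * Real.exp (d / (2 * σ))) -
       Real.arctan (Real.sqrt (q / p) * Real.exp (-(d / (2 * σ))))) with hg
  have heq : ∀ᶠ σ in nhdsWithin (0:ℝ) (Set.Ioi 0),
      (∫ x in (0:ℝ)..d, 1 / (p * laplacePDF σ x + q * laplacePDF σ (d - x))) /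
        (Real.pi * σ ^ 2 * Real.exp (d / (2 * σ))) = g σ := by
    filter_upwards [self_mem_nhdsWithin] with σ hσ
    have hσ : (0:ℝ) < σ := hσ
    rw [laplace_integral_eval p q d hp hq hd σ hσ, hg]
    have hE : Real.exp (d / (2 * σ)) ≠ 0 := Real.exp_ne_zero _
    field_simp
  rw [tendsto_congr' heq]
  -- limits
  have hlim : Tendsto (fun σ : ℝ => d / (2 * σ)) (nhdsWithin 0 (Set.Ioi 0)) atTop := by
    have : Tendsto (fun σ : ℝ => σ⁻¹) (nhdsWithin 0 (Set.Ioi 0)) atTop :=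
      tendsto_inv_nhdsGT_zero
    have := this.const_mul_atTop (show (0:ℝ) < d / 2 by linarith)
    convert this using 2 with σ
    field_simp
  have h1 : Tendsto (fun σ : ℝ => Real.arctan (Real.sqrt (q / p) * Real.exp (d / (2 * σ))))
      (nhdsWithin 0 (Set.Ioi 0)) (nhds (Real.pi / 2)) := by
    have hsqp : 0 < Real.sqrt (q / p) := Real.sqrt_pos.2 (by positivity)
    have hexp : Tendsto (fun σ : ℝ => Real.sqrt (q / p) * Real.exp (d / (2 * σ)))
        (nhdsWithin 0 (Set.Ioi 0)) atTop :=
      (Real.tendsto_exp_atTop.comp hlim).const_mul_atTop hsqp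
    exact (Real.tendsto_arctan_atTop.mono_right nhdsWithin_le_nhds).comp hexp
  have h2 : Tendsto (fun σ : ℝ => Real.arctan (Real.sqrt (q / p) * Real.exp (-(d / (2 * σ)))))
      (nhdsWithin 0 (Set.Ioi 0)) (nhds 0) := by
    have hexp : Tendsto (fun σ : ℝ => Real.sqrt (q / p) * Real.exp (-(d / (2 * σ))))
        (nhdsWithin 0 (Set.Ioi 0)) (nhds 0) := by
      have := (Real.tendsto_exp_atBot.comp (tendsto_neg_atTop_atBot.comp hlim)).const_mul
        (Real.sqrt (q / p))
      simpa using this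
    have := (Real.continuous_arctan.tendsto 0).comp hexp
    rw [Real.arctan_zero] at this
    exact this
  have := ((h1.sub h2).const_mul (2 / (Real.pi * Real.sqrt (p * q))))
  convert this using 2
  field_simp
  ring
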